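/- Let n ≥ 2 and let w₀, …, wₙ ∈ ℝⁿ satisfy w₀ + ⋯ + wₙ = 0. Define the facet normals z₀, …, zₙ by z_p := −[w₀, w₁, …, wₙ with w_p and w_{p+1} omitted] for 0 ≤ p ≤ n−1, and zₙ := (−1)^(n+1)·[w₁, …, w_{n−1}]. Let D := det of the n × n matrix whose columns are w₁, …, wₙ. Then, with indices read modulo n+1 (so w_{n+1} = w₀): ⟪w_p, z_p⟫ = D for all p, ⟪w_{p+1}, z_p⟫ = −D for all p, and ⟪w_p, z_q⟫ = 0 whenever p ≠ q and p ≠ q+1. -/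

import Mathlib

open scoped RealInnerProductSpace BigOperators

/-- The `n × n` matrix whose first column is `w₀` and whose remaining columns are
`w 0, …, w (n - 2)`. -/
noncomputable def colMat {n : ℕ} (w₀ : EuclideanSpace ℝ (Fin n))
    (w : Fin (n - 1) → EuclideanSpace ℝ (Fin n)) : Matrix (Fin n) (Fin n) ℝ :=
  Matrix.of fun r c =>
    if _h : (c : ℕ) = 0 then w₀ r
    else w ⟨(c : ℕ) - 1, by have := c.isLt; omega⟩ r

/-- The vector product `[w 0, …, w (n-2)]` of `n - 1` vectors in `ℝⁿ`: the unique vector `v`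
with `⟪w₀, v⟫ = det (w₀, w 0, …, w (n-2))` for all `w₀`. -/
noncomputable def vprod {n : ℕ} (w : Fin (n - 1) → EuclideanSpace ℝ (Fin n)) :
    EuclideanSpace ℝ (Fin n) :=
  (WithLp.equiv 2 (Fin n → ℝ)).symm fun i => (colMat (EuclideanSpace.single i 1) w).det

/-- The facet normal `z p` of a loop `w 0, …, w n` of `n + 1` vectors in `ℝⁿ`:
`z p = -[w 0, …, w n  with  w p, w (p+1)  omitted]` for `0 ≤ p ≤ n - 1`, and
`z n = (-1)^(n+1) • [w 1, …, w (n-1)]`. -/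
noncomputable def facet {n : ℕ} (w : Fin (n + 1) → EuclideanSpace ℝ (Fin n))
    (p : Fin (n + 1)) : EuclideanSpace ℝ (Fin n) :=
  if _h : (p : ℕ) < n then
    - vprod (fun j : Fin (n - 1) =>
        if (j : ℕ) < (p : ℕ) then w ⟨(j : ℕ), by have := j.isLt; omega⟩
        else w ⟨(j : ℕ) + 2, by have := j.isLt; omega⟩)
  else
    ((-1 : ℝ) ^ (n + 1)) • vprod (fun j : Fin (n - 1) => w ⟨(j : ℕ) + 1, by have := j.isLt; omega⟩)

noncomputable def detUpd {k : ℕ} (M : Matrix (Fin k) (Fin k) ℝ) (j : Fin k) :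
    (Fin k → ℝ) →ₗ[ℝ] ℝ where
  toFun v := (M.updateCol j v).det
  map_add' u v := Matrix.det_updateCol_add M j u v
  map_smul' s v := by simpa using Matrix.det_updateCol_smul M j s v

lemma detUpd_apply {k : ℕ} (M : Matrix (Fin k) (Fin k) ℝ) (j : Fin k) (v : Fin k → ℝ) :
    detUpd M j v = (M.updateCol j v).det := rfl


lemma inner_vprod {m : ℕ} (x : EuclideanSpace ℝ (Fin (m+1)))
    (w : Fin m → EuclideanSpace ℝ (Fin (m+1))) :
    ⟪x, vprod w⟫ = (colMat x w).det := by
  have hcol : ∀ v : EuclideanSpace ℝ (Fin (m+1)),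
      (colMat x w).updateCol 0 (fun r => v r) = colMat v w := by
    intro v
    ext r c
    by_cases hc : (c : ℕ) = 0
    · have hc0 : c = 0 := Fin.ext hc
      subst hc0
      simp [colMat, Matrix.updateCol_apply]
    · have hc' : c ≠ 0 := fun h => hc (by simp [h])
      simp [colMat, Matrix.updateCol_apply, hc, hc']
  have h1 : ⟪x, vprod w⟫ = ∑ i, x i * (colMat (EuclideanSpace.single i 1) w).det := by
    simp [vprod, PiLp.inner_apply, RCLike.inner_apply, mul_comm]
  have h2 : ∀ i, (EuclideanSpace.single i (1:ℝ) : Fin (m+1) → ℝ)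
      = fun j => if i = j then (1:ℝ) else 0 := by
    intro i; funext j; rw [EuclideanSpace.single_apply]; simp [eq_comm]
  rw [h1]
  have h3 := LinearMap.pi_apply_eq_sum_univ (detUpd (colMat x w) 0) (fun r => x r)
  rw [detUpd_apply, hcol x] at h3
  rw [h3]
  refine Finset.sum_congr rfl fun i _ => ?_
  rw [smul_eq_mul, detUpd_apply]
  congr 1
  rw [← hcol (EuclideanSpace.single i 1)]
  congr 1
  funext j
  rw [h2 i]


noncomputable def Dt {n : ℕ} (w : Fin (n+1) → EuclideanSpace ℝ (Fin n))
    (f : Fin n → Fin (n+1)) : ℝ :=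
  (Matrix.of fun r c => w (f c) r).det

lemma Dt_comp_perm {n : ℕ} (w : Fin (n+1) → EuclideanSpace ℝ (Fin n))
    (f : Fin n → Fin (n+1)) (σ : Equiv.Perm (Fin n)) :
    Dt w (f ∘ σ) = ((Equiv.Perm.sign σ : ℤ) : ℝ) * Dt w f := by
  have h : (Matrix.of fun r c => w ((f ∘ σ) c) r)
      = (Matrix.of fun r c => w (f c) r).submatrix id σ := rfl
  rw [Dt, h, Matrix.det_permute']
  simp [Dt]

lemma Dt_zero {n : ℕ} (w : Fin (n+1) → EuclideanSpace ℝ (Fin n))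
    (f : Fin n → Fin (n+1)) {c₁ c₂ : Fin n} (h : c₁ ≠ c₂) (hf : f c₁ = f c₂) :
    Dt w f = 0 :=
  Matrix.det_zero_of_column_eq h (fun r => by simp [hf])

lemma coe_succAbove {n : ℕ} (t : Fin (n+1)) (c : Fin n) :
    ((t.succAbove c : Fin (n+1)) : ℕ) = if (c:ℕ) < (t:ℕ) then (c:ℕ) else (c:ℕ)+1 := by
  rw [Fin.succAbove]
  split_ifs with h h' h' <;>
    simp_all [Fin.lt_def, Fin.coe_castSucc, Fin.val_succ] <;> omega

lemma Dt_succAbove {n : ℕ} (w : Fin (n+1) → EuclideanSpace ℝ (Fin n))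
    (hw : (∑ i, w i) = 0) (k : Fin (n+1)) :
    Dt w (Fin.succAbove k) = (-1:ℝ)^(k:ℕ) * Dt w Fin.succ := by
  induction k using Fin.induction with
  | zero => simp [Fin.succAbove_zero]
  | succ k ih =>
    set M : Matrix (Fin n) (Fin n) ℝ :=
      Matrix.of fun r c => w ((Fin.castSucc k).succAbove c) r with hM
    -- values of succAbove
    have hsA : ∀ c : Fin n, c ≠ k → (Fin.succ k).succAbove c = (Fin.castSucc k).succAbove c := by
      intro c hc
      have hc' : (c:ℕ) ≠ (k:ℕ) := fun h => hc (Fin.ext h)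
      apply Fin.ext
      rw [coe_succAbove, coe_succAbove]
      simp only [Fin.val_succ, Fin.coe_castSucc]
      split_ifs <;> omega
    have hk1 : (Fin.succ k).succAbove k = Fin.castSucc k := by
      apply Fin.ext; rw [coe_succAbove]; simp
    have hk2 : (Fin.castSucc k).succAbove k = Fin.succ k := by
      apply Fin.ext; rw [coe_succAbove]; simp
    -- matrix identity
    have h1 : (Matrix.of fun r c => w ((Fin.succ k).succAbove c) r)
        = M.updateCol k (fun r => w (Fin.castSucc k) r) := by
      ext r c
      rcases eq_or_ne c k with rfl | hc
      · simp [Matrix.updateCol_apply, hk1]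
      · simp [Matrix.updateCol_apply, hc, hM, hsA c hc]
    -- sum identity
    set T : Finset (Fin (n+1)) :=
      (Finset.univ.erase (Fin.castSucc k)).erase (Fin.succ k) with hT
    have hne : Fin.succ k ≠ Fin.castSucc k := by
      intro h; have := congrArg Fin.val h; simp at this
    have hmem : Fin.succ k ∈ Finset.univ.erase (Fin.castSucc k) :=
      Finset.mem_erase.2 ⟨hne, Finset.mem_univ _⟩
    have hsum : w (Fin.castSucc k) = - w (Fin.succ k) - ∑ j ∈ T, w j := by
      have e1 := Finset.add_sum_erase Finset.univ w (Finset.mem_univ (Fin.castSucc k))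
      have e2 := Finset.add_sum_erase _ w hmem
      rw [← e2] at e1
      rw [hw] at e1
      rw [hT]
      linear_combination (norm := abel) e1
    -- pointwise version
    have hsum' : (fun r => w (Fin.castSucc k) r)
        = (fun r => - w (Fin.succ k) r - ∑ j ∈ T, w j r) := by
      funext r
      have hev : ∀ (s : Finset (Fin (n+1))), (∑ j ∈ s, w j) r = ∑ j ∈ s, w j r := by
        intro s
        exact map_sum (PiLp.projₗ (𝕜 := ℝ) 2 (fun _ : Fin n => ℝ) r) w s
      have := congrArg (fun v : EuclideanSpace ℝ (Fin n) => v r) hsum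
      simpa [hev] using this
    have hTzero : ∀ j ∈ T, detUpd M k (fun r => w j r) = 0 := by
      intro j hj
      have hj1 : j ≠ Fin.succ k := (Finset.mem_erase.1 hj).1
      have hj2 : j ≠ Fin.castSucc k :=
        (Finset.mem_erase.1 (Finset.mem_erase.1 hj).2).1
      obtain ⟨i, hi⟩ := Fin.exists_succAbove_eq hj2
      have hik : i ≠ k := by
        intro h; subst h; rw [hk2] at hi; exact hj1 hi.symm
      rw [detUpd_apply]
      refine Matrix.det_zero_of_column_eq hik fun r => ?_
      rw [Matrix.updateCol_apply, Matrix.updateCol_apply, if_neg hik, if_pos rfl,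
        hM]
      simp [hi]
    have hMsucc : detUpd M k (fun r => w (Fin.succ k) r) = M.det := by
      have hcolk : (fun r => w (Fin.succ k) r) = fun r => M r k := by
        funext r; rw [hM]; simp [hk2]
      rw [detUpd_apply, hcolk, Matrix.updateCol_eq_self]
    have main : Dt w (Fin.succAbove (Fin.succ k)) = - M.det := by
      calc Dt w (Fin.succAbove (Fin.succ k))
          = (M.updateCol k (fun r => w (Fin.castSucc k) r)).det := by rw [Dt, h1]
        _ = detUpd M k (fun r => w (Fin.castSucc k) r) := rfl
        _ = detUpd M k ((-(fun r => w (Fin.succ k) r))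
              - ∑ j ∈ T, (fun r => w j r)) := by
            refine congrArg (detUpd M k) ?_
            funext r
            have h := congrFun hsum' r
            simpa [Finset.sum_apply] using h
        _ = - detUpd M k (fun r => w (Fin.succ k) r)
              - ∑ j ∈ T, detUpd M k (fun r => w j r) := by
            rw [map_sub, map_neg, map_sum]
        _ = - M.det - 0 := by rw [hMsucc, Finset.sum_eq_zero hTzero]
        _ = - M.det := by ring
    have hMdet : M.det = Dt w (Fin.succAbove (Fin.castSucc k)) := rfl
    rw [main, hMdet, ih, Fin.coe_castSucc, Fin.val_succ, pow_succ]
    ring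


def Ffun (n : ℕ) (p : Fin (n+1)) (q : ℕ) : Fin n → Fin (n+1) := fun c =>
  if _h : (c : ℕ) = 0 then p
  else if (c : ℕ) - 1 < q then ⟨(c : ℕ) - 1, by have := c.isLt; omega⟩
  else ⟨(c : ℕ) + 1, by have := c.isLt; omega⟩

def Gfun (n : ℕ) (p : Fin (n+1)) : Fin n → Fin (n+1) := fun c =>
  if _h : (c : ℕ) = 0 then p else ⟨(c : ℕ), by have := c.isLt; omega⟩

lemma coe_Ffun (n : ℕ) (p : Fin (n+1)) (q : ℕ) (c : Fin n) :
    ((Ffun n p q c : Fin (n+1)) : ℕ)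
      = if (c : ℕ) = 0 then (p : ℕ) else
        if (c : ℕ) - 1 < q then (c : ℕ) - 1 else (c : ℕ) + 1 := by
  rw [Ffun]
  split_ifs <;> simp_all

lemma coe_Gfun (n : ℕ) (p : Fin (n+1)) (c : Fin n) :
    ((Gfun n p c : Fin (n+1)) : ℕ)
      = if (c : ℕ) = 0 then (p : ℕ) else (c : ℕ) := by
  rw [Gfun]
  split_ifs <;> simp_all

lemma coe_cycleRange {m : ℕ} (i j : Fin (m+2)) :
    ((Fin.cycleRange i j : Fin (m+2)) : ℕ)
      = if (j : ℕ) < (i : ℕ) then (j : ℕ) + 1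
        else if (j : ℕ) = (i : ℕ) then 0 else (j : ℕ) := by
  rcases lt_trichotomy j i with h | h | h
  · rw [Fin.coe_cycleRange_of_lt h, if_pos (Fin.lt_def.mp h)]
  · subst h
    rw [Fin.cycleRange_self]
    simp
  · rw [Fin.cycleRange_of_gt h]
    have := Fin.lt_def.mp h
    rw [if_neg (by omega), if_neg (by omega)]

lemma inner_facet_of_lt {m : ℕ} (w : Fin (m+3) → EuclideanSpace ℝ (Fin (m+2)))
    (q : Fin (m+3)) (hq : (q : ℕ) < m+2) (p : Fin (m+3)) :
    ⟪w p, facet w q⟫ = - Dt w (Ffun (m+2) p (q : ℕ)) := by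
  rw [facet, dif_pos hq, inner_neg_right, inner_vprod (m := m+1)]
  rw [Dt]
  congr 1
  congr 1
  ext r c
  by_cases hc : (c : ℕ) = 0
  · simp [colMat, Matrix.of_apply, hc, (Fin.ext hc : c = 0), Ffun]
  · by_cases h2 : (c : ℕ) - 1 < (q : ℕ)
    · simp only [colMat, Matrix.of_apply, Ffun, dif_neg hc, if_pos h2]
    · simp only [colMat, Matrix.of_apply, Ffun, dif_neg hc, if_neg h2]
      refine congrArg (fun i => w i r) ?_
      apply Fin.ext
      simp
      omega

lemma inner_facet_of_last {m : ℕ} (w : Fin (m+3) → EuclideanSpace ℝ (Fin (m+2)))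
    (p : Fin (m+3)) :
    ⟪w p, facet w (Fin.last (m+2))⟫ = (-1:ℝ)^(m+3) * Dt w (Gfun (m+2) p) := by
  rw [facet, dif_neg (by simp), real_inner_smul_right, inner_vprod (m := m+1)]
  rw [Dt]
  congr 1
  congr 1
  ext r c
  by_cases hc : (c : ℕ) = 0
  · simp [colMat, Matrix.of_apply, hc, (Fin.ext hc : c = 0), Gfun]
  · simp only [colMat, Matrix.of_apply, Gfun, dif_neg hc]
    refine congrArg (fun i => w i r) ?_
    apply Fin.ext
    simp
    omega

lemma cast_sign_cycleRange {m : ℕ} (i : Fin (m+2)) :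
    (((Equiv.Perm.sign (Fin.cycleRange i)) : ℤ) : ℝ) = (-1:ℝ)^(i:ℕ) := by
  rw [Fin.sign_cycleRange]
  push_cast
  norm_num

lemma neg_one_sq_pow (k : ℕ) : (-1:ℝ)^k * (-1:ℝ)^k = 1 := by
  rw [← mul_pow]; norm_num

lemma Dt_Ffun_diag {m : ℕ} (w : Fin (m+3) → EuclideanSpace ℝ (Fin (m+2)))
    (hw : (∑ i, w i) = 0) (q : Fin (m+3)) (hq : (q : ℕ) < m+2) :
    Dt w (Ffun (m+2) q (q : ℕ)) = - Dt w Fin.succ := by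
  set q' : Fin (m+2) := ⟨(q : ℕ), hq⟩ with hq'
  set t : Fin (m+3) := ⟨(q : ℕ)+1, by omega⟩ with ht
  have hcomp : Ffun (m+2) q (q : ℕ) ∘ (Fin.cycleRange q') = Fin.succAbove t := by
    funext j
    simp only [Function.comp_apply]
    apply Fin.ext
    rw [coe_Ffun, coe_succAbove, coe_cycleRange]
    simp only [hq', ht, Fin.val_mk]
    split_ifs <;> (first | omega | simp_all)
  have hperm := Dt_comp_perm w (Ffun (m+2) q (q : ℕ)) (Fin.cycleRange q')
  rw [hcomp, cast_sign_cycleRange, Dt_succAbove w hw t] at hperm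
  simp only [ht, hq', Fin.val_mk] at hperm
  -- hperm : (-1)^(q+1) * Dt succ = (-1)^q * Dt Ffun
  have hsq := neg_one_sq_pow (q : ℕ)
  rw [pow_succ] at hperm
  linear_combination (-(-1:ℝ)^(q:ℕ)) * hperm - (Dt w Fin.succ + Dt w (Ffun (m+2) q (q : ℕ))) * hsq

lemma Dt_Ffun_succ {m : ℕ} (w : Fin (m+3) → EuclideanSpace ℝ (Fin (m+2)))
    (hw : (∑ i, w i) = 0) (q : Fin (m+3)) (hq : (q : ℕ) < m+2)
    (p : Fin (m+3)) (hp : (p : ℕ) = (q : ℕ)+1) :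
    Dt w (Ffun (m+2) p (q : ℕ)) = Dt w Fin.succ := by
  set q' : Fin (m+2) := ⟨(q : ℕ), hq⟩ with hq'
  set t : Fin (m+3) := ⟨(q : ℕ), by omega⟩ with ht
  have hcomp : Ffun (m+2) p (q : ℕ) ∘ (Fin.cycleRange q') = Fin.succAbove t := by
    funext j
    simp only [Function.comp_apply]
    apply Fin.ext
    rw [coe_Ffun, coe_succAbove, coe_cycleRange]
    simp only [hq', ht, Fin.val_mk, hp]
    split_ifs <;> (first | omega | simp_all)
  have hperm := Dt_comp_perm w (Ffun (m+2) p (q : ℕ)) (Fin.cycleRange q')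
  rw [hcomp, cast_sign_cycleRange, Dt_succAbove w hw t] at hperm
  simp only [ht, hq', Fin.val_mk] at hperm
  have hsq := neg_one_sq_pow (q : ℕ)
  linear_combination (-(-1:ℝ)^(q:ℕ)) * hperm + (Dt w Fin.succ - Dt w (Ffun (m+2) p (q : ℕ))) * hsq

lemma Dt_Gfun_last {m : ℕ} (w : Fin (m+3) → EuclideanSpace ℝ (Fin (m+2))) :
    Dt w (Gfun (m+2) (Fin.last (m+2))) = (-1:ℝ)^(m+1) * Dt w Fin.succ := by
  have hcomp : Gfun (m+2) (Fin.last (m+2)) ∘ (Fin.cycleRange (Fin.last (m+1)))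
      = Fin.succ := by
    funext j
    simp only [Function.comp_apply]
    apply Fin.ext
    rw [coe_Gfun, coe_cycleRange]
    simp only [Fin.val_last, Fin.val_succ]
    have := j.isLt
    split_ifs <;> (first | omega | simp_all)
  have hperm := Dt_comp_perm w (Gfun (m+2) (Fin.last (m+2))) (Fin.cycleRange (Fin.last (m+1)))
  rw [hcomp, cast_sign_cycleRange] at hperm
  simp only [Fin.val_last] at hperm
  have hsq := neg_one_sq_pow (m+1)
  linear_combination (-(-1:ℝ)^(m+1)) * hperm - (Dt w (Gfun (m+2) (Fin.last (m+2)))) * hsq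

lemma Dt_Gfun_zero {m : ℕ} (w : Fin (m+3) → EuclideanSpace ℝ (Fin (m+2)))
    (hw : (∑ i, w i) = 0) :
    Dt w (Gfun (m+2) 0) = (-1:ℝ)^(m+2) * Dt w Fin.succ := by
  have hfun : Gfun (m+2) 0 = Fin.succAbove (Fin.last (m+2)) := by
    funext c
    apply Fin.ext
    rw [coe_Gfun, coe_succAbove]
    simp only [Fin.val_last, Fin.val_zero]
    have := c.isLt
    split_ifs <;> (first | omega | simp_all)
  rw [hfun, Dt_succAbove w hw, Fin.val_last]

theorem inner_facet (n : ℕ) (hn : 2 ≤ n)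
    (w : Fin (n + 1) → EuclideanSpace ℝ (Fin n)) (hw : (∑ i, w i) = 0)
    (D : ℝ) (hD : D = (Matrix.of fun r (c : Fin n) => w c.succ r).det) :
    (∀ p, ⟪w p, facet w p⟫ = D) ∧
    (∀ p, ⟪w (p + 1), facet w p⟫ = -D) ∧
    (∀ p q, p ≠ q → p ≠ q + 1 → ⟪w p, facet w q⟫ = 0) := by
  obtain ⟨m, rfl⟩ : ∃ m, n = m + 2 := ⟨n - 2, by omega⟩
  have hDD : D = Dt w Fin.succ := hD
  refine ⟨?_, ?_, ?_⟩
  · intro p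
    by_cases hp : (p : ℕ) < m + 2
    · rw [inner_facet_of_lt w p hp p, Dt_Ffun_diag w hw p hp, hDD]
      ring
    · have hpl : p = Fin.last (m+2) := Fin.ext (by have := p.isLt; simp [Fin.val_last]; omega)
      rw [hpl, inner_facet_of_last, Dt_Gfun_last, hDD, ← mul_assoc, ← pow_add]
      have he : (-1:ℝ) ^ (m + 3 + (m + 1)) = 1 := Even.neg_one_pow ⟨m+2, by ring⟩
      rw [he, one_mul]
  · intro p
    by_cases hp : (p : ℕ) < m + 2
    · have hlast : p ≠ Fin.last (m+2) := by
        intro h; rw [h, Fin.val_last] at hp; omega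
      have hval : ((p + 1 : Fin (m+3)) : ℕ) = (p : ℕ) + 1 := by
        rw [Fin.val_add_one, if_neg hlast]
      rw [inner_facet_of_lt w p hp (p+1), Dt_Ffun_succ w hw p hp (p+1) hval, hDD]
    · have hpl : p = Fin.last (m+2) := Fin.ext (by have := p.isLt; simp [Fin.val_last]; omega)
      rw [hpl, Fin.last_add_one, inner_facet_of_last, Dt_Gfun_zero w hw, hDD, ← mul_assoc,
        ← pow_add]
      have ho : (-1:ℝ) ^ (m + 3 + (m + 2)) = -1 := Odd.neg_one_pow ⟨m+2, by ring⟩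
      rw [ho]
      ring
  · intro p q hpq hpq1
    by_cases hq : (q : ℕ) < m + 2
    · have h1 : (p : ℕ) ≠ (q : ℕ) := fun h => hpq (Fin.ext h)
      have hlast : q ≠ Fin.last (m+2) := by
        intro h; rw [h, Fin.val_last] at hq; omega
      have h2 : (p : ℕ) ≠ (q : ℕ) + 1 := by
        intro h
        exact hpq1 (Fin.ext (by rw [Fin.val_add_one, if_neg hlast]; exact h))
      rw [inner_facet_of_lt w q hq p]
      have hp3 := p.isLt
      rcases Nat.lt_or_ge (p : ℕ) (q : ℕ) with hlt | hge
      · rw [Dt_zero w _ (c₁ := (0 : Fin (m+2))) (c₂ := ⟨(p:ℕ)+1, by omega⟩)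
          (Fin.ne_of_val_ne (by simp only [Fin.val_zero, Fin.val_mk]; omega))
          (Fin.ext (by rw [coe_Ffun, coe_Ffun]
                       simp only [Fin.val_zero, Fin.val_mk]
                       split_ifs <;> omega))]
        ring
      · have hgt : (q : ℕ) + 1 < (p : ℕ) := by omega
        rw [Dt_zero w _ (c₁ := (0 : Fin (m+2))) (c₂ := ⟨(p:ℕ)-1, by omega⟩)
          (Fin.ne_of_val_ne (by simp only [Fin.val_zero, Fin.val_mk]; omega))
          (Fin.ext (by rw [coe_Ffun, coe_Ffun]
                       simp only [Fin.val_zero, Fin.val_mk]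
                       split_ifs <;> omega))]
        ring
    · have hql : q = Fin.last (m+2) := Fin.ext (by have := q.isLt; simp [Fin.val_last]; omega)
      subst hql
      have hp2 : (p : ℕ) ≠ m + 2 := by
        intro h; exact hpq (Fin.ext (by rw [h, Fin.val_last]))
      have hp0 : (p : ℕ) ≠ 0 := by
        intro h
        apply hpq1
        rw [Fin.last_add_one]
        exact Fin.ext (by simp [h])
      have hp3 := p.isLt
      rw [inner_facet_of_last w p,
        Dt_zero w _ (c₁ := (0 : Fin (m+2))) (c₂ := ⟨(p:ℕ), by omega⟩)
          (Fin.ne_of_val_ne (by simp only [Fin.val_zero, Fin.val_mk]; omega))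
          (Fin.ext (by rw [coe_Gfun, coe_Gfun]
                       simp only [Fin.val_zero, Fin.val_mk]
                       split_ifs <;> omega))]
      ring
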